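/- Call an n×n integer matrix A a skew tree matrix if Aᵀ = −A, all entries of A lie in {−1, 0, 1}, and the simple graph on {1,…,n} in which distinct i and j are adjacent exactly when A(i,j) ≠ 0 is a tree (connected and acyclic). Then every skew tree matrix A is GL(ℤ)-congruent (i.e. of the form PᵀBP with det P = ±1) to a block-diagonal matrix consisting of s copies of the 2×2 matrix J with rows (0,1), (−1,0) followed by a t×t zero block, for some s, t ≥ 0 with 2s + t = n. -/

import Mathlib

open Matrix

namespace Stmt16
open SimpleGraph


variable {k l m : Type} [Fintype k] [Fintype l] [Fintype m]
  [DecidableEq k] [DecidableEq l] [DecidableEq m]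

def Cong (A : Matrix k k ℤ) (B : Matrix l l ℤ) : Prop :=
  ∃ (P : Matrix l k ℤ) (Q : Matrix k l ℤ), P * Q = 1 ∧ Q * P = 1 ∧ Pᵀ * B * P = A

lemma Cong.refl (A : Matrix k k ℤ) : Cong A A :=
  ⟨1, 1, by simp, by simp, by simp⟩

lemma Cong.trans {A : Matrix k k ℤ} {B : Matrix l l ℤ} {C : Matrix m m ℤ}
    (h1 : Cong A B) (h2 : Cong B C) : Cong A C := by
  obtain ⟨P₁, Q₁, hPQ₁, hQP₁, hA⟩ := h1
  obtain ⟨P₂, Q₂, hPQ₂, hQP₂, hB⟩ := h2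
  refine ⟨P₂ * P₁, Q₁ * Q₂, ?_, ?_, ?_⟩
  · calc P₂ * P₁ * (Q₁ * Q₂) = P₂ * (P₁ * Q₁) * Q₂ := by simp only [Matrix.mul_assoc]
    _ = 1 := by rw [hPQ₁]; simpa using hPQ₂
  · calc Q₁ * Q₂ * (P₂ * P₁) = Q₁ * (Q₂ * P₂) * P₁ := by simp only [Matrix.mul_assoc]
    _ = 1 := by rw [hQP₂]; simpa using hQP₁
  · rw [transpose_mul, ← hA, ← hB]; simp only [Matrix.mul_assoc]

lemma Cong.symm {A : Matrix k k ℤ} {B : Matrix l l ℤ} (h : Cong A B) : Cong B A := by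
  obtain ⟨P, Q, hPQ, hQP, hA⟩ := h
  refine ⟨Q, P, hQP, hPQ, ?_⟩
  rw [← hA]
  calc Qᵀ * (Pᵀ * B * P) * Q = (P * Q)ᵀ * B * (P * Q) := by rw [transpose_mul]; simp only [Matrix.mul_assoc]
  _ = B := by rw [hPQ]; simp

lemma cong_submatrix_equiv (B : Matrix l l ℤ) (e : k ≃ l) : Cong (B.submatrix e e) B := by
  refine ⟨(1 : Matrix l l ℤ).submatrix (Equiv.refl l) (e : k → l),
    (1 : Matrix l l ℤ).submatrix (e : k → l) (Equiv.refl l), ?_, ?_, ?_⟩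
  · rw [submatrix_mul_equiv (e₂ := e)]
    simp
  · rw [submatrix_mul_equiv (e₂ := Equiv.refl l)]
    simp [submatrix_one_equiv e]
  · rw [transpose_submatrix, transpose_one, mul_submatrix_one (Equiv.refl l) e,
      one_submatrix_mul (e : k → l) (Equiv.refl l)]
    simp

lemma Cong.reindex {B : Matrix l l ℤ} {A : Matrix k k ℤ} (e : l ≃ k)
    (h : Cong A B) : Cong A ((Matrix.reindex e e) B) := by
  refine h.trans (Cong.symm ?_)
  have : (Matrix.reindex e e) B = B.submatrix e.symm e.symm := rfl
  rw [this]
  exact cong_submatrix_equiv B e.symm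

lemma Cong.fromBlocks {k1 k2 l1 l2 : Type} [Fintype k1] [Fintype k2] [Fintype l1] [Fintype l2]
    [DecidableEq k1] [DecidableEq k2] [DecidableEq l1] [DecidableEq l2]
    {A : Matrix k1 k1 ℤ} {A' : Matrix l1 l1 ℤ} {B : Matrix k2 k2 ℤ} {B' : Matrix l2 l2 ℤ}
    (h1 : Cong A A') (h2 : Cong B B') :
    Cong (Matrix.fromBlocks A 0 0 B) (Matrix.fromBlocks A' 0 0 B') := by
  obtain ⟨P₁, Q₁, hPQ₁, hQP₁, hA⟩ := h1
  obtain ⟨P₂, Q₂, hPQ₂, hQP₂, hB⟩ := h2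
  refine ⟨Matrix.fromBlocks P₁ 0 0 P₂, Matrix.fromBlocks Q₁ 0 0 Q₂, ?_, ?_, ?_⟩
  · simp [Matrix.fromBlocks_multiply, hPQ₁, hPQ₂, ← Matrix.fromBlocks_one]
  · simp [Matrix.fromBlocks_multiply, hQP₁, hQP₂, ← Matrix.fromBlocks_one]
  · simp [Matrix.fromBlocks_transpose, Matrix.fromBlocks_multiply, hA, hB]



open Classical in
lemma exists_leaf {V : Type} [Fintype V] {G : SimpleGraph V} (hG : G.IsAcyclic)
    {a b : V} (hab : G.Adj a b) :
    ∃ v w, G.Adj v w ∧ ∀ u, G.Adj v u → u = w := by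
  classical
  set N := Fintype.card V with hN
  set Pr : ℕ → Prop := fun L => ∃ (x y : V) (p : G.Walk x y), p.IsPath ∧ p.length = L with hPr
  have hP1 : Pr 1 := ⟨a, b, Walk.cons hab Walk.nil, by simp [hab.ne], by simp⟩
  have h1N : 1 ≤ N := by
    have : Nonempty V := ⟨a⟩
    exact Fintype.card_pos
  set L := Nat.findGreatest Pr N with hL
  have hL1 : 1 ≤ L := Nat.le_findGreatest h1N hP1
  have hPL : Pr L := Nat.findGreatest_spec h1N hP1
  obtain ⟨x, y, p, hp, hlen⟩ := hPL
  -- consider the reversed walk from y to x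
  have hyx : y ≠ x := by
    rintro rfl
    have : p = Walk.nil := Walk.isPath_iff_eq_nil.mp hp
    rw [this] at hlen
    simp at hlen
    omega
  obtain ⟨z, hyz, q, hq⟩ := Walk.exists_eq_cons_of_ne hyx p.reverse
  have hrp : p.reverse.IsPath := hp.reverse
  refine ⟨y, z, hyz, fun u hyu => ?_⟩
  by_contra huz
  by_cases hmem : u ∈ p.reverse.support
  · -- two distinct paths from y to u, contradiction with acyclicity
    have h₁ : (Walk.cons hyu Walk.nil).IsPath := by simp [hyu.ne]
    have h₂ : (p.reverse.takeUntil u hmem).IsPath := hrp.takeUntil hmem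
    have := hG.path_unique ⟨Walk.cons hyu Walk.nil, h₁⟩ ⟨p.reverse.takeUntil u hmem, h₂⟩
    have hwalk : Walk.cons hyu Walk.nil = p.reverse.takeUntil u hmem := by
      simpa using congrArg Subtype.val this
    have hspec := p.reverse.take_spec hmem
    rw [← hwalk] at hspec
    have e1 : ((Walk.cons hyu Walk.nil).append (p.reverse.dropUntil u hmem)).getVert 1
        = p.reverse.getVert 1 := congrArg (fun w => Walk.getVert w 1) hspec
    have e2 : p.reverse.getVert 1 = z := by
      rw [hq, Walk.getVert_cons_succ, Walk.getVert_zero]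
    rw [Walk.cons_append, Walk.getVert_cons_succ, Walk.getVert_zero] at e1
    exact huz (e1.trans e2)
  · -- extend the path, contradicting maximality
    have hext : (Walk.cons hyu.symm p.reverse).IsPath := hrp.cons hmem
    have hlt : p.reverse.length + 1 < N := hext.length_lt
    have : Pr (L + 1) := ⟨u, x, Walk.cons hyu.symm p.reverse, hext, by
      simp [Walk.length_reverse, hlen]⟩
    have := Nat.le_findGreatest (le_of_lt (by simpa [Walk.length_reverse, hlen] using hlt)) this
    omega



lemma cong_two {ε : ℤ} (hε : ε = 1 ∨ ε = -1) :
    Cong !![0, ε; -ε, 0] !![(0:ℤ),1;-1,0] := by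
  refine ⟨!![1,0;0,ε], !![1,0;0,ε], ?_, ?_, ?_⟩ <;>
  · rcases hε with rfl | rfl <;>
    · ext i j
      fin_cases i <;> fin_cases j <;>
        simp [Matrix.mul_apply, Fin.sum_univ_two, Matrix.one_apply, Matrix.transpose_apply, Matrix.vecHead, Matrix.vecTail]

noncomputable def succEquiv (s t : ℕ) : (Fin 2 ⊕ ((Fin 2 × Fin s) ⊕ Fin t)) ≃ ((Fin 2 × Fin (s+1)) ⊕ Fin t) := by
  refine Equiv.ofBijective
    (fun x => match x with
      | Sum.inl j => Sum.inl (j, 0)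
      | Sum.inr (Sum.inl ji) => Sum.inl (ji.1, ji.2.succ)
      | Sum.inr (Sum.inr u) => Sum.inr u)
    ⟨?_, ?_⟩
  · rintro (j | (⟨j, i⟩ | u)) (j' | (⟨j', i'⟩ | u')) h <;>
      simp_all [Prod.ext_iff, (Fin.succ_ne_zero _), (Fin.succ_ne_zero _).symm, Fin.succ_inj]
  · rintro (⟨j, i⟩ | u)
    · induction i using Fin.cases with
      | zero => exact ⟨Sum.inl j, rfl⟩
      | succ i' => exact ⟨Sum.inr (Sum.inl (j, i')), rfl⟩
    · exact ⟨Sum.inr (Sum.inr u), rfl⟩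

lemma submatrix_succEquiv (s t : ℕ) (M : Matrix (Fin 2) (Fin 2) ℤ) :
    (Matrix.fromBlocks (blockDiagonal fun _ : Fin (s+1) => M) 0 0
        (0 : Matrix (Fin t) (Fin t) ℤ)).submatrix (succEquiv s t) (succEquiv s t) =
      Matrix.fromBlocks M 0 0
        (Matrix.fromBlocks (blockDiagonal fun _ : Fin s => M) 0 0
          (0 : Matrix (Fin t) (Fin t) ℤ)) := by
  ext x y
  rcases x with j | (⟨j, i⟩ | u) <;> rcases y with j' | (⟨j', i'⟩ | u') <;>
    simp [succEquiv, Matrix.blockDiagonal_apply, (Fin.succ_ne_zero _),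
      (Fin.succ_ne_zero _).symm, Fin.succ_inj, Equiv.ofBijective]

lemma blockzero (t : ℕ) (M : Matrix (Fin 2) (Fin 2) ℤ) :
    Matrix.fromBlocks (blockDiagonal fun _ : Fin 0 => M) 0 0
        (0 : Matrix (Fin t) (Fin t) ℤ) = 0 := by
  ext x y
  rcases x with ⟨j, i⟩ | u
  · exact absurd i.2 (by omega)
  · rcases y with ⟨j', i'⟩ | u' <;> simp


lemma main (N : ℕ) : ∀ (k : Type) [Fintype k] [DecidableEq k], Fintype.card k = N →
    ∀ A : Matrix k k ℤ, Aᵀ = -A → (∀ i j, A i j = -1 ∨ A i j = 0 ∨ A i j = 1) →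
    (SimpleGraph.fromRel fun i j => A i j ≠ 0).IsAcyclic →
    ∃ s t, 2 * s + t = N ∧
      Cong A (Matrix.fromBlocks (blockDiagonal fun _ : Fin s => !![(0:ℤ),1;-1,0]) 0 0
        (0 : Matrix (Fin t) (Fin t) ℤ)) := by
  induction N using Nat.strong_induction_on with
  | _ N IH =>
    intro k _ _ hcard A hskew hent hAc
    have hsk : ∀ i j, A j i = -A i j := by
      intro i j
      have := congrFun (congrFun hskew i) j
      simpa [Matrix.transpose_apply, Matrix.neg_apply] using this
    have hdiag : ∀ i, A i i = 0 := by
      intro i; have := hsk i i; omega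
    by_cases hA : A = 0
    · refine ⟨0, N, by omega, ?_⟩
      have e : k ≃ ((Fin 2 × Fin 0) ⊕ Fin N) :=
        Fintype.equivOfCardEq (by simp [hcard])
      have h0 := cong_submatrix_equiv
        (Matrix.fromBlocks (blockDiagonal fun _ : Fin 0 => !![(0:ℤ),1;-1,0]) 0 0
          (0 : Matrix (Fin N) (Fin N) ℤ)) e
      rw [blockzero] at h0
      simpa [hA, blockzero] using h0
    · -- find an edge
      have : ∃ i j, A i j ≠ 0 := by
        by_contra h
        push_neg at h
        exact hA (by ext i j; simpa using h i j)
      obtain ⟨i, j, hij⟩ := this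
      have hne : i ≠ j := fun h => hij (h ▸ hdiag i)
      have hadj : (SimpleGraph.fromRel fun i j => A i j ≠ 0).Adj i j :=
        (SimpleGraph.fromRel_adj _ i j).mpr ⟨hne, Or.inl hij⟩
      obtain ⟨v, w, hvw, hleaf⟩ := exists_leaf hAc hadj
      have hvwne : v ≠ w := hvw.ne
      have hεne : A v w ≠ 0 := by
        have h := (SimpleGraph.fromRel_adj _ v w).mp hvw
        rcases h.2 with h' | h'
        · exact h'
        · intro h0
          apply h'
          rw [hsk v w, h0, neg_zero]
      set ε := A v w with hεdef
      have hε : ε = 1 ∨ ε = -1 := by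
        rcases hent v w with h | h | h
        · exact Or.inr (by rw [hεdef, h])
        · exact absurd (hεdef.trans h) hεne
        · exact Or.inl (by rw [hεdef, h])
      have hε2 : ε * ε = 1 := by rcases hε with h | h <;> rw [h] <;> norm_num
      have hleafA : ∀ u, u ≠ v → u ≠ w → A v u = 0 := by
        intro u hu hw
        by_contra h
        exact hw (hleaf u ((SimpleGraph.fromRel_adj _ v u).mpr ⟨Ne.symm hu, Or.inl h⟩))
      set c : k → ℤ := fun x => if x = v ∨ x = w then 0 else ε * A w x with hc
      have hcv : c v = 0 := by simp [hc]
      have hcw : c w = 0 := by simp [hc]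
      set Nm : Matrix k k ℤ := Matrix.of fun a b => if a = v then c b else 0 with hNm
      have hNN : Nm * Nm = 0 := by
        ext a b
        rw [Matrix.mul_apply]
        rw [Matrix.zero_apply]
        apply Finset.sum_eq_zero
        intro x _
        rcases eq_or_ne x v with rfl | hx
        · simp [hNm, hcv]
        · simp [hNm, hx]
      set P : Matrix k k ℤ := 1 + Nm with hP
      set Q : Matrix k k ℤ := 1 - Nm with hQ
      have hPQ : P * Q = 1 := by
        have h : (1 + Nm) * (1 - Nm) = 1 - Nm * Nm := by noncomm_ring
        rw [hP, hQ, h, hNN, sub_zero]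
      have hQP : Q * P = 1 := by
        have h : (1 - Nm) * (1 + Nm) = 1 - Nm * Nm := by noncomm_ring
        rw [hP, hQ, h, hNN, sub_zero]
      have h1 : ∀ (M : Matrix k k ℤ) a b, (M * P) a b = M a b + M a v * c b := by
        intro M a b
        rw [hP, Matrix.mul_add, Matrix.mul_one, Matrix.add_apply]
        congr 1
        rw [Matrix.mul_apply]
        rw [Finset.sum_eq_single v]
        · simp [hNm]
        · intro x _ hx; simp [hNm, hx]
        · intro h; exact absurd (Finset.mem_univ v) h
      have h2 : ∀ (M : Matrix k k ℤ) a b, (Pᵀ * M) a b = M a b + c a * M v b := by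
        intro M a b
        rw [hP, Matrix.transpose_add, Matrix.transpose_one, Matrix.add_mul, Matrix.one_mul,
          Matrix.add_apply]
        congr 1
        rw [Matrix.mul_apply]
        rw [Finset.sum_eq_single v]
        · simp [hNm]
        · intro x _ hx; simp [hNm, hx]
        · intro h; exact absurd (Finset.mem_univ v) h
      set B : Matrix k k ℤ := Pᵀ * A * P with hBdef
      have hBapp : ∀ a b, B a b = A a b + A a v * c b + c a * A v b := by
        intro a b
        have hB2 : B = Pᵀ * (A * P) := by rw [hBdef, Matrix.mul_assoc]
        rw [hB2, h2 (A * P) a b, h1 A a b, h1 A v b, hdiag v]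
        ring
      have hBsk : ∀ a b, B b a = -B a b := by
        intro a b
        rw [hBapp, hBapp, hsk a b, hsk v b, hsk a v]
        ring
      have hBvw : B v w = ε := by
        rw [hBapp, hdiag v, hcv]
        ring
      have hBv : ∀ u, u ≠ w → B v u = 0 := by
        intro u hu
        rw [hBapp, hdiag v, hcv]
        rcases eq_or_ne u v with h | h
        · rw [h, hdiag v]; ring
        · rw [hleafA u h hu]; ring
      have hBw : ∀ u, u ≠ v → B w u = 0 := by
        intro u hu
        rw [hBapp]
        rcases eq_or_ne u w with h | h
        · rw [h, hdiag w, hcw]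
          ring
        · have hcu : c u = ε * A w u := by simp [hc, hu, h]
          have hwv : A w v = -ε := by rw [hsk v w]
          have hvu : A v u = 0 := hleafA u hu h
          rw [hcu, hwv, hvu]
          linear_combination (-(A w u)) * hε2
      have hBrest : ∀ (u u' : k), u ≠ v → u ≠ w → u' ≠ v → u' ≠ w → B u u' = A u u' := by
        intro u u' h1' h2' h3' h4'
        have ha : A u v = 0 := by rw [hsk v u, hleafA u h1' h2', neg_zero]
        have hb : A v u' = 0 := hleafA u' h3' h4'
        rw [hBapp, ha, hb]
        ring
      -- the restricted matrix
      set k' := {u : k // u ≠ v ∧ u ≠ w} with hk'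
      set A' : Matrix k' k' ℤ := Matrix.of fun u u' => A u.1 u'.1 with hA'
      set f : (Fin 2 ⊕ k') → k := fun x => match x with
        | Sum.inl j => if j = 0 then v else w
        | Sum.inr u => u.1 with hf
      have fin2 : ∀ j : Fin 2, j = 0 ∨ j = 1 := by decide
      have hf0 : f (Sum.inl 0) = v := rfl
      have hf1 : f (Sum.inl 1) = w := rfl
      have hfr : ∀ u : k', f (Sum.inr u) = u.1 := fun _ => rfl
      have hfbij : Function.Bijective f := by
        constructor
        · rintro (j | u) (j' | u') h
          · rcases fin2 j with rfl | rfl <;> rcases fin2 j' with rfl | rfl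
            · rfl
            · rw [hf0, hf1] at h; exact absurd h hvwne
            · rw [hf1, hf0] at h; exact absurd h.symm hvwne
            · rfl
          · exfalso; rcases fin2 j with rfl | rfl
            · rw [hf0, hfr] at h; exact u'.2.1 h.symm
            · rw [hf1, hfr] at h; exact u'.2.2 h.symm
          · exfalso; rcases fin2 j' with rfl | rfl
            · rw [hfr, hf0] at h; exact u.2.1 h
            · rw [hfr, hf1] at h; exact u.2.2 h
          · rw [hfr, hfr] at h
            exact congrArg Sum.inr (Subtype.ext h)
        · intro u
          by_cases huv : u = v
          · exact ⟨Sum.inl 0, by rw [hf0, huv]⟩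
          · by_cases huw : u = w
            · exact ⟨Sum.inl 1, by rw [hf1, huw]⟩
            · exact ⟨Sum.inr ⟨u, huv, huw⟩, rfl⟩
      set e : (Fin 2 ⊕ k') ≃ k := Equiv.ofBijective f hfbij with he
      have he0 : e (Sum.inl 0) = v := rfl
      have he1 : e (Sum.inl 1) = w := rfl
      have her : ∀ u : k', e (Sum.inr u) = u.1 := fun _ => rfl
      have hBsub' : ∀ x y, B (e x) (e y) =
          Matrix.fromBlocks !![0, ε; -ε, 0] 0 0 A' x y := by
        intro x y
        rcases x with j | u <;> rcases y with j' | u'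
        · rcases fin2 j with rfl | rfl <;> rcases fin2 j' with rfl | rfl
          · rw [he0, Matrix.fromBlocks_apply₁₁, hBv v hvwne]
            norm_num
          · rw [he0, he1, Matrix.fromBlocks_apply₁₁, hBvw]
            norm_num
          · rw [he1, he0, Matrix.fromBlocks_apply₁₁, hBsk v w, hBvw]
            norm_num
          · rw [he1, Matrix.fromBlocks_apply₁₁, hBw w hvwne.symm]
            norm_num
        · rcases fin2 j with rfl | rfl
          · rw [he0, her, Matrix.fromBlocks_apply₁₂, hBv u'.1 u'.2.2]
            simp
          · rw [he1, her, Matrix.fromBlocks_apply₁₂, hBw u'.1 u'.2.1]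
            simp
        · rcases fin2 j' with rfl | rfl
          · rw [he0, her, Matrix.fromBlocks_apply₂₁, hBsk v u.1, hBv u.1 u.2.2]
            simp
          · rw [he1, her, Matrix.fromBlocks_apply₂₁, hBsk w u.1, hBw u.1 u.2.1]
            simp
        · rw [her, her, Matrix.fromBlocks_apply₂₂,
            hBrest u.1 u'.1 u.2.1 u.2.2 u'.2.1 u'.2.2]
          rfl
      have hBsub : B.submatrix e e = Matrix.fromBlocks !![0, ε; -ε, 0] 0 0 A' := by
        ext x y
        rw [Matrix.submatrix_apply]
        exact hBsub' x y
      have hCongBA : Cong B A := ⟨P, Q, hPQ, hQP, hBdef.symm⟩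
      have hCongsub : Cong (Matrix.fromBlocks !![0, ε; -ε, 0] 0 0 A') B := by
        rw [← hBsub]
        exact cong_submatrix_equiv B e
      -- induction hypothesis on A'
      have hcard2 : 2 + Fintype.card k' = N := by
        rw [← hcard, ← Fintype.card_congr e]
        simp
      have hA'skew : A'ᵀ = -A' := by
        ext u u'
        exact hsk u.1 u'.1
      have hA'ent : ∀ u u', A' u u' = -1 ∨ A' u u' = 0 ∨ A' u u' = 1 := fun u u' => hent _ _
      have hA'ac : (SimpleGraph.fromRel fun u u' : k' => A' u u' ≠ 0).IsAcyclic := by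
        intro u cyc hcyc
        set φ : (SimpleGraph.fromRel fun u u' : k' => A' u u' ≠ 0) →g
            (SimpleGraph.fromRel fun i j : k => A i j ≠ 0) :=
          ⟨Subtype.val, by
            intro a b hab
            rw [SimpleGraph.fromRel_adj] at hab ⊢
            exact ⟨fun h => hab.1 (Subtype.ext h), hab.2⟩⟩ with hφ
        exact hAc (cyc.map φ) (hcyc.map (by exact Subtype.val_injective))
      obtain ⟨s, t, hst, hcng⟩ := IH (Fintype.card k') (by omega) k' rfl A' hA'skew hA'ent hA'ac
      have hmid := Cong.fromBlocks (cong_two hε) hcng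
      have hlast : Cong (Matrix.fromBlocks !![(0:ℤ),1;-1,0] 0 0
          (Matrix.fromBlocks (blockDiagonal fun _ : Fin s => !![(0:ℤ),1;-1,0]) 0 0
            (0 : Matrix (Fin t) (Fin t) ℤ)))
          (Matrix.fromBlocks (blockDiagonal fun _ : Fin (s+1) => !![(0:ℤ),1;-1,0]) 0 0
            (0 : Matrix (Fin t) (Fin t) ℤ)) := by
        have h := cong_submatrix_equiv
          (Matrix.fromBlocks (blockDiagonal fun _ : Fin (s+1) => !![(0:ℤ),1;-1,0]) 0 0
            (0 : Matrix (Fin t) (Fin t) ℤ)) (succEquiv s t)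
        rwa [submatrix_succEquiv] at h
      exact ⟨s + 1, t, by omega, (hCongBA.symm.trans hCongsub.symm).trans (hmid.trans hlast)⟩



end Stmt16

open Matrix

/-- Proposition 6.3: every skew tree matrix `A` (i.e. `Aᵀ = −A`, entries in `{−1,0,1}`, and the
graph in which distinct `i`, `j` are adjacent exactly when `A i j ≠ 0` is a tree) is
`GL(ℤ)`-congruent to a block-diagonal matrix consisting of `s` copies of `J = !![0,1;-1,0]`
followed by a `t × t` zero block, where `2s + t = n`. -/
theorem stmt_16 (n : ℕ) (A : Matrix (Fin n) (Fin n) ℤ)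
    (hskew : Aᵀ = -A)
    (hent : ∀ i j, A i j = -1 ∨ A i j = 0 ∨ A i j = 1)
    (htree : (SimpleGraph.fromRel fun i j => A i j ≠ 0).IsTree) :
    ∃ (s t : ℕ) (h : 2 * s + t = n) (P : Matrix (Fin n) (Fin n) ℤ),
      (P.det = 1 ∨ P.det = -1) ∧
      Pᵀ *
        (Matrix.reindex
          (((Equiv.sumCongr finProdFinEquiv (Equiv.refl (Fin t))).trans
            finSumFinEquiv).trans (finCongr h))
          (((Equiv.sumCongr finProdFinEquiv (Equiv.refl (Fin t))).trans
            finSumFinEquiv).trans (finCongr h))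
          (Matrix.fromBlocks
            (Matrix.blockDiagonal fun _ : Fin s => !![(0 : ℤ), 1; -1, 0]) 0 0
            (0 : Matrix (Fin t) (Fin t) ℤ))) * P = A := by
  obtain ⟨s, t, hst, hcong⟩ := Stmt16.main n (Fin n) (by simp) A hskew hent htree.IsAcyclic
  refine ⟨s, t, hst, ?_⟩
  set E := (((Equiv.sumCongr finProdFinEquiv (Equiv.refl (Fin t))).trans
    finSumFinEquiv).trans (finCongr hst)) with hE
  set T := (Matrix.fromBlocks
    (Matrix.blockDiagonal fun _ : Fin s => !![(0 : ℤ), 1; -1, 0]) 0 0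
    (0 : Matrix (Fin t) (Fin t) ℤ)) with hT
  have h1 : Stmt16.Cong ((Matrix.reindex E E) T) T := by
    have : (Matrix.reindex E E) T = T.submatrix E.symm E.symm := rfl
    rw [this]
    exact Stmt16.cong_submatrix_equiv T E.symm
  obtain ⟨P, Q, hPQ, hQP, hA⟩ := hcong.trans h1.symm
  refine ⟨P, ?_, hA⟩
  have hdet : P.det * Q.det = 1 := by rw [← Matrix.det_mul, hPQ, Matrix.det_one]
  exact Int.eq_one_or_neg_one_of_mul_eq_one hdet
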